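/- Let A be an associative unital ring and let U, D ∈ A satisfy DU + UD = 1. Then for every integer n ≥ 1: D^n U^n = U^n D^n if n is even, and D^n U^n = U^{n−1} D^{n−1} − U^n D^n if n is odd. -/
import Mathlib


/-- Let `A` be an associative unital ring and `U D : A` satisfy
`DU + UD = 1`.  Then for every `n ≥ 1`, `DⁿUⁿ = UⁿDⁿ` if `n` is even and
`DⁿUⁿ = U^(n-1)D^(n-1) - UⁿDⁿ` if `n` is odd. -/
theorem statement1 {A : Type*} [Ring A] (U D : A) (h : D * U + U * D = 1)
    (n : ℕ) (hn : 1 ≤ n) :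
    (Even n → D ^ n * U ^ n = U ^ n * D ^ n) ∧
    (Odd n → D ^ n * U ^ n = U ^ (n - 1) * D ^ (n - 1) - U ^ n * D ^ n) := by
  have hDU : D * U = 1 - U * D := eq_sub_of_add_eq h
  have c1 : Commute (D ^ 2) U := by
    show D ^ 2 * U = U * D ^ 2
    calc D ^ 2 * U = D * (D * U) := by noncomm_ring
      _ = D * (1 - U * D) := by rw [hDU]
      _ = D - (D * U) * D := by noncomm_ring
      _ = D - (1 - U * D) * D := by rw [hDU]
      _ = U * D ^ 2 := by noncomm_ring
  have c2 : Commute U (D ^ 2) := c1.symm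
  have c3 : Commute D (U ^ 2) := by
    show D * U ^ 2 = U ^ 2 * D
    calc D * U ^ 2 = (D * U) * U := by noncomm_ring
      _ = (1 - U * D) * U := by rw [hDU]
      _ = U - U * (D * U) := by noncomm_ring
      _ = U - U * (1 - U * D) := by rw [hDU]
      _ = U ^ 2 * D := by noncomm_ring
  -- even powers of D commute with any power of U
  have key : ∀ m k : ℕ, D ^ (2 * m) * U ^ k = U ^ k * D ^ (2 * m) := by
    intro m k
    have : Commute (D ^ (2 * m)) (U ^ k) := by
      rw [pow_mul]
      exact (c1.pow_left m).pow_right k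
    exact this
  constructor
  · rintro ⟨m, rfl⟩
    have : m + m = 2 * m := by ring
    rw [this]
    -- U ^ (2m) = (U^2)^m commutes with D, hence with D^(2m)
    exact key m (2 * m)
  · rintro ⟨m, rfl⟩
    have hsub : 2 * m + 1 - 1 = 2 * m := by omega
    rw [hsub]
    have e1 : D ^ (2 * m + 1) * U ^ (2 * m + 1)
        = D ^ (2 * m) * ((D * U) * U ^ (2 * m)) := by
      rw [pow_succ, pow_succ']
      noncomm_ring
    rw [e1, hDU]
    have e2 : D ^ (2 * m) * ((1 - U * D) * U ^ (2 * m))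
        = D ^ (2 * m) * U ^ (2 * m) - D ^ (2 * m) * (U * (D * U ^ (2 * m))) := by
      noncomm_ring
    have hDU2m : D * U ^ (2 * m) = U ^ (2 * m) * D := by
      have : Commute D (U ^ (2 * m)) := by
        rw [pow_mul]
        exact c3.pow_right m
      exact this
    rw [e2, hDU2m, key m (2 * m)]
    have : D ^ (2 * m) * (U * (U ^ (2 * m) * D)) = U ^ (2 * m + 1) * D ^ (2 * m + 1) := by
      calc D ^ (2 * m) * (U * (U ^ (2 * m) * D))
          = (D ^ (2 * m) * U ^ (2 * m + 1)) * D := by rw [pow_succ']; noncomm_ring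
        _ = U ^ (2 * m + 1) * (D ^ (2 * m) * D) := by rw [key m (2 * m + 1)]; noncomm_ring
        _ = U ^ (2 * m + 1) * D ^ (2 * m + 1) := by rw [← pow_succ]
    rw [this]
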